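/- If g is a slowly varying function on [1, ∞) (i.e., g is positive measurable and g(λx)/g(x) → 1 as x → ∞ for every λ > 0) and ε > 0, then the sequence (max_{1 ≤ k ≤ n} g(k) k^ε) / (g(n) n^ε) is bounded over n ≥ 1. -/

import Mathlib

open Filter

section SlowVarAux
open MeasureTheory Set ENNReal

private lemma slowVar_uct (h : ℝ → ℝ) (hmeas : Measurable h)
    (hs : ∀ u : ℝ, Tendsto (fun x => h (x + u) - h x) atTop (nhds 0))
    {δ : ℝ} (hδ : 0 < δ) :
    ∃ X : ℝ, ∀ x ≥ X, ∀ u ∈ Icc (0:ℝ) 1, |h (x + u) - h x| ≤ δ := by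
  by_contra hcon
  push_neg at hcon
  choose xs hxs us hmem hbig using fun n : ℕ => hcon n
  have xs_top : Tendsto xs atTop atTop :=
    tendsto_atTop_mono hxs tendsto_natCast_atTop_atTop
  set A : ℕ → Set ℝ := fun n =>
    Icc (0:ℝ) 2 ∩ {t | δ/2 ≤ |h (xs n + t) - h (xs n)|} with hA
  set B : ℕ → Set ℝ := fun n =>
    Icc (0:ℝ) 2 ∩ {t | δ/2 ≤ |h (xs n + us n + t) - h (xs n + us n)|} with hB
  have hAm : ∀ n, MeasurableSet (A n) := fun n =>
    measurableSet_Icc.inter <| measurableSet_le measurable_const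
      ((hmeas.comp (measurable_const.add measurable_id)).sub measurable_const).abs
  have hBm : ∀ n, MeasurableSet (B n) := fun n =>
    measurableSet_Icc.inter <| measurableSet_le measurable_const
      ((hmeas.comp (measurable_const.add measurable_id)).sub measurable_const).abs
  have key : ∀ (ys : ℕ → ℝ), Tendsto ys atTop atTop →
      ∀ t : ℝ, ∀ᶠ n in atTop, ¬ (δ/2 ≤ |h (ys n + t) - h (ys n)|) := by
    intro ys hys t
    have h1 : Tendsto (fun n => h (ys n + t) - h (ys n)) atTop (nhds 0) :=
      (hs t).comp hys
    have h2 : Tendsto (fun n => |h (ys n + t) - h (ys n)|) atTop (nhds 0) := by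
      simpa using h1.abs
    filter_upwards [h2.eventually_lt_const (half_pos hδ)] with n hn
    exact not_le.mpr hn
  have hAlim : Tendsto (fun n => volume (A n)) atTop (nhds 0) := by
    have := tendsto_measure_of_tendsto_indicator (L := atTop) (A := (∅ : Set ℝ))
      (μ := volume) hAm measurableSet_Icc
      (by simp [Real.volume_Icc] : volume (Icc (0:ℝ) 2) ≠ ⊤)
      (Eventually.of_forall fun n => inter_subset_left)
      (fun t => by
        filter_upwards [key xs xs_top t] with n hn
        simp [hA, hn])
    simpa using this
  have hBlim : Tendsto (fun n => volume (B n)) atTop (nhds 0) := by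
    have hys : Tendsto (fun n => xs n + us n) atTop atTop :=
      tendsto_atTop_mono (fun n => by nlinarith [(hmem n).1, hxs n])
        tendsto_natCast_atTop_atTop
    have := tendsto_measure_of_tendsto_indicator (L := atTop) (A := (∅ : Set ℝ))
      (μ := volume) hBm measurableSet_Icc
      (by simp [Real.volume_Icc] : volume (Icc (0:ℝ) 2) ≠ ⊤)
      (Eventually.of_forall fun n => inter_subset_left)
      (fun t => by
        filter_upwards [key _ hys t] with n hn
        simp [hB, hn])
    simpa using this
  have hhalf : (0:ℝ≥0∞) < 1/2 := by norm_num
  obtain ⟨n, hAn, hBn⟩ : ∃ n, volume (A n) < 1/2 ∧ volume (B n) < 1/2 := by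
    have := (hAlim.eventually_lt_const hhalf).and (hBlim.eventually_lt_const hhalf)
    exact this.exists
  set B' : Set ℝ := (fun t => -(us n) + t) ⁻¹' (B n) with hB'
  have hB'v : volume B' = volume (B n) := measure_preimage_add volume _ _
  have hsub : ¬ (Icc (us n) 2 ⊆ A n ∪ B') := by
    intro hss
    have h1 : (1:ℝ≥0∞) ≤ volume (Icc (us n) 2) := by
      rw [Real.volume_Icc]
      have : (1:ℝ) ≤ 2 - us n := by linarith [(hmem n).2]
      calc (1:ℝ≥0∞) = ENNReal.ofReal 1 := by simp
        _ ≤ ENNReal.ofReal (2 - us n) := ENNReal.ofReal_le_ofReal this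
    have h2 : volume (Icc (us n) 2) ≤ volume (A n) + volume B' :=
      le_trans (measure_mono hss) (measure_union_le _ _)
    rw [hB'v] at h2
    have : (1:ℝ≥0∞) < 1 := lt_of_le_of_lt (le_trans h1 h2)
      (by calc volume (A n) + volume (B n) < 1/2 + 1/2 := ENNReal.add_lt_add hAn hBn
        _ = 1 := ENNReal.add_halves 1)
    exact lt_irrefl _ this
  obtain ⟨t, ht, htn⟩ := not_subset.mp hsub
  obtain ⟨htA, htB'⟩ := not_or.mp htn
  have hu0 : (0:ℝ) ≤ us n := (hmem n).1
  have hu1 : us n ≤ 1 := (hmem n).2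
  have ht02 : t ∈ Icc (0:ℝ) 2 := ⟨le_trans hu0 ht.1, ht.2⟩
  have e1 : |h (xs n + t) - h (xs n)| < δ/2 := by
    by_contra hc
    exact htA ⟨ht02, not_lt.mp hc⟩
  have ht02' : -(us n) + t ∈ Icc (0:ℝ) 2 := ⟨by linarith [ht.1], by linarith [ht.2]⟩
  have e2 : |h (xs n + us n + (-(us n) + t)) - h (xs n + us n)| < δ/2 := by
    by_contra hc
    exact htB' ⟨ht02', not_lt.mp hc⟩
  have heq : xs n + us n + (-(us n) + t) = xs n + t := by ring
  rw [heq] at e2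
  have := hbig n
  have : |h (xs n + us n) - h (xs n)| ≤
      |h (xs n + us n) - h (xs n + t)| + |h (xs n + t) - h (xs n)| := abs_sub_le _ _ _
  rw [abs_sub_comm (h (xs n + us n)) (h (xs n + t))] at this
  linarith [hbig n]


private lemma slowVar_chain (h : ℝ → ℝ) {δ X : ℝ} (hδ : 0 < δ)
    (H : ∀ x ≥ X, ∀ u ∈ Icc (0:ℝ) 1, |h (x + u) - h x| ≤ δ) :
    ∀ x y : ℝ, X ≤ x → x ≤ y → |h y - h x| ≤ δ * (y - x) + δ := by
  have key : ∀ n : ℕ, ∀ x y : ℝ, X ≤ x → x ≤ y → y ≤ x + n →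
      |h y - h x| ≤ δ * n := by
    intro n
    induction n with
    | zero =>
      intro x y hx hxy hyx
      have : y = x := le_antisymm (by simpa using hyx) hxy
      simp [this]
    | succ n ih =>
      intro x y hx hxy hyn
      by_cases hc : y ≤ x + n
      · calc |h y - h x| ≤ δ * n := ih x y hx hxy hc
          _ ≤ δ * (n + 1 : ℕ) := by push_cast; nlinarith
      · set z := max x (y - 1) with hz
        have hxz : x ≤ z := le_max_left _ _
        have hzy : z ≤ y := max_le hxy (by linarith)
        have hzX : X ≤ z := le_trans hx hxz
        have hzn : z ≤ x + n := by
          apply max_le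
          · have : (0:ℝ) ≤ n := Nat.cast_nonneg n
            linarith
          · push_cast at hyn ⊢; linarith
        have h1 : |h y - h z| ≤ δ := by
          have := H z hzX (y - z) ⟨sub_nonneg.2 hzy, by
            have : y - 1 ≤ z := le_max_right _ _
            linarith⟩
          rwa [add_sub_cancel] at this
        have h2 : |h z - h x| ≤ δ * n := ih x z hx hxz hzn
        calc |h y - h x| ≤ |h y - h z| + |h z - h x| := abs_sub_le _ _ _
          _ ≤ δ + δ * n := add_le_add h1 h2
          _ = δ * (n + 1 : ℕ) := by push_cast; ring
  intro x y hx hxy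
  have hle : y ≤ x + (⌈y - x⌉₊ : ℝ) := by
    have := Nat.le_ceil (y - x)
    linarith
  have hub : (⌈y - x⌉₊ : ℝ) ≤ (y - x) + 1 :=
    le_of_lt (Nat.ceil_lt_add_one (sub_nonneg.2 hxy))
  calc |h y - h x| ≤ δ * (⌈y - x⌉₊ : ℝ) := key _ x y hx hxy hle
    _ ≤ δ * ((y - x) + 1) := mul_le_mul_of_nonneg_left hub hδ.le
    _ = δ * (y - x) + δ := by ring

end SlowVarAux

/-- If `g` is slowly varying on `[1, ∞)` (positive, measurable, and `g(λx)/g(x) → 1` as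
`x → ∞` for every `λ > 0`) and `ε > 0`, then the sequence
`(max_{1 ≤ k ≤ n} g(k) k^ε) / (g(n) n^ε)` is bounded over `n ≥ 1`. -/
theorem max_slowly_varying_rpow_div_bounded
    (g : ℝ → ℝ) (hg_pos : ∀ x ≥ (1 : ℝ), 0 < g x) (hg_meas : Measurable g)
    (hg_slow : ∀ l : ℝ, 0 < l →
      Tendsto (fun x : ℝ => g (l * x) / g x) atTop (nhds 1))
    (ε : ℝ) (hε : 0 < ε) :
    ∃ C : ℝ, ∀ n : ℕ, ∀ hn : 1 ≤ n,
      ((Finset.Icc 1 n).sup' (Finset.nonempty_Icc.mpr hn)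
          (fun k : ℕ => g k * (k : ℝ) ^ ε)) / (g n * (n : ℝ) ^ ε) ≤ C := by
  set h : ℝ → ℝ := fun x => Real.log (g (Real.exp x)) with hh
  have hmeas : Measurable h := Real.measurable_log.comp (hg_meas.comp Real.measurable_exp)
  have hs : ∀ u : ℝ, Tendsto (fun x => h (x + u) - h x) atTop (nhds 0) := by
    intro u
    have h1 : Tendsto (fun x : ℝ => g (Real.exp u * x) / g x) atTop (nhds 1) :=
      hg_slow _ (Real.exp_pos u)
    have h2 : Tendsto (fun x : ℝ => g (Real.exp u * Real.exp x) / g (Real.exp x))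
        atTop (nhds 1) := h1.comp Real.tendsto_exp_atTop
    have h3 : Tendsto
        (fun x : ℝ => Real.log (g (Real.exp u * Real.exp x) / g (Real.exp x)))
        atTop (nhds 0) := by
      have := ((Real.continuousAt_log one_ne_zero).tendsto).comp h2
      simpa [Function.comp_def] using this
    apply h3.congr'
    filter_upwards [eventually_ge_atTop (0:ℝ), eventually_ge_atTop (-u)] with x hx hux
    have e1 : (1:ℝ) ≤ Real.exp x := Real.one_le_exp hx
    have e2 : (1:ℝ) ≤ Real.exp (x + u) := Real.one_le_exp (by linarith)
    have : Real.exp u * Real.exp x = Real.exp (x + u) := by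
      rw [← Real.exp_add]; ring_nf
    rw [this, Real.log_div (ne_of_gt (hg_pos _ e2)) (ne_of_gt (hg_pos _ e1))]
  set δ : ℝ := ε / 2 with hδdef
  have hδ : 0 < δ := half_pos hε
  obtain ⟨X₀, hX₀⟩ := slowVar_uct h hmeas hs hδ
  set X : ℝ := max X₀ 0 with hX
  have hXuse : ∀ x ≥ X, ∀ u ∈ Set.Icc (0:ℝ) 1, |h (x + u) - h x| ≤ δ :=
    fun x hx u hu => hX₀ x (le_trans (le_max_left _ _) hx) u hu
  have hch := slowVar_chain h hδ hXuse
  -- translate h on logs of naturals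
  have hlog_g : ∀ k : ℕ, 1 ≤ k → h (Real.log k) = Real.log (g k) := by
    intro k hk
    have : (0:ℝ) < k := by exact_mod_cast hk
    simp [hh, Real.exp_log this]
  set N : ℕ := max 1 ⌈Real.exp X⌉₊ with hN
  have hN1 : 1 ≤ N := le_max_left _ _
  have hNX : ∀ k : ℕ, N ≤ k → X ≤ Real.log k := by
    intro k hk
    have hk0 : (0:ℝ) < k := by
      have : 1 ≤ k := le_trans hN1 hk
      exact_mod_cast this
    rw [Real.le_log_iff_exp_le hk0]
    calc Real.exp X ≤ (⌈Real.exp X⌉₊ : ℝ) := Nat.le_ceil _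
      _ ≤ (N : ℝ) := by exact_mod_cast le_max_right _ _
      _ ≤ (k : ℝ) := by exact_mod_cast hk
  set F : ℕ → ℝ := fun k => g k * (k : ℝ) ^ ε with hF
  have hFpos : ∀ k : ℕ, 1 ≤ k → 0 < F k := by
    intro k hk
    have hk1 : (1:ℝ) ≤ k := by exact_mod_cast hk
    have : (0:ℝ) < k := by linarith
    exact mul_pos (hg_pos _ hk1) (Real.rpow_pos_of_pos this ε)
  have hFexp : ∀ k : ℕ, 1 ≤ k →
      F k = Real.exp (Real.log (g k) + ε * Real.log k) := by
    intro k hk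
    have hk1 : (1:ℝ) ≤ k := by exact_mod_cast hk
    have hk0 : (0:ℝ) < k := by linarith
    have hr : ((k:ℝ)) ^ ε = Real.exp (ε * Real.log k) := by
      rw [Real.rpow_def_of_pos hk0, mul_comm]
    show g k * (k:ℝ) ^ ε = _
    rw [hr, Real.exp_add, Real.exp_log (hg_pos _ hk1)]
  -- Potter bound between naturals ≥ N
  have potter : ∀ k n : ℕ, N ≤ k → k ≤ n →
      Real.log (g k) - Real.log (g n) ≤ δ * (Real.log n - Real.log k) + δ := by
    intro k n hk hkn
    have hXk : X ≤ Real.log k := hNX k hk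
    have hlg : Real.log k ≤ Real.log n := by
      have hk0 : (0:ℝ) < k := by
        have : 1 ≤ k := le_trans hN1 hk
        exact_mod_cast this
      exact Real.log_le_log hk0 (by exact_mod_cast hkn)
    have := hch (Real.log k) (Real.log n) hXk hlg
    rw [hlog_g k (le_trans hN1 hk), hlog_g n (le_trans hN1 (le_trans hk hkn))] at this
    have habs := neg_abs_le (Real.log (g n) - Real.log (g k))
    have h2 : -(δ * (Real.log n - Real.log k) + δ) ≤ Real.log (g n) - Real.log (g k) := by
      have := neg_le_of_abs_le this
      linarith [abs_nonneg (Real.log (g n) - Real.log (g k))]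
    linarith [abs_le.mp this]
  -- upper bound between terms
  have hmain : ∀ k n : ℕ, N ≤ k → k ≤ n → F k ≤ Real.exp δ * F n := by
    intro k n hk hkn
    have hk1 : 1 ≤ k := le_trans hN1 hk
    have hn1 : 1 ≤ n := le_trans hk1 hkn
    rw [hFexp k hk1, hFexp n hn1, ← Real.exp_add, Real.exp_le_exp]
    have hp := potter k n hk hkn
    have hlg : Real.log k ≤ Real.log n := by
      have hk0 : (0:ℝ) < k := by exact_mod_cast hk1
      exact Real.log_le_log hk0 (by exact_mod_cast hkn)
    rw [hδdef] at hp ⊢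
    nlinarith [mul_nonneg hε.le (sub_nonneg.mpr hlg)]
  -- lower bound on F n for n ≥ N
  set c : ℝ := Real.exp (Real.log (g N) + ε * Real.log N - δ) with hc
  have hclow : ∀ n : ℕ, N ≤ n → c ≤ F n := by
    intro n hn
    have hn1 : 1 ≤ n := le_trans hN1 hn
    rw [hFexp n hn1, hc, Real.exp_le_exp]
    have hp := potter N n le_rfl hn
    have hlg : Real.log N ≤ Real.log n := by
      have : (0:ℝ) < N := by exact_mod_cast hN1
      exact Real.log_le_log this (by exact_mod_cast hn)
    rw [hδdef] at hp ⊢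
    nlinarith [mul_nonneg hε.le (sub_nonneg.mpr hlg)]
  have hcpos : 0 < c := Real.exp_pos _
  -- the finite part
  have hIccN : (Finset.Icc 1 N).Nonempty := Finset.nonempty_Icc.mpr hN1
  set M : ℝ := (Finset.Icc 1 N).sup' hIccN F with hM
  set m : ℝ := (Finset.Icc 1 N).inf' hIccN F with hm
  have hmpos : 0 < m := by
    rw [hm]
    obtain ⟨k, hkmem, hkeq⟩ := Finset.exists_mem_eq_inf' hIccN F
    rw [hkeq]
    exact hFpos k (Finset.mem_Icc.mp hkmem).1
  have hMpos : 0 < M :=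
    lt_of_lt_of_le (hFpos 1 le_rfl) (Finset.le_sup' F (Finset.mem_Icc.mpr ⟨le_rfl, hN1⟩))
  refine ⟨max (max (Real.exp δ) (M / c)) (M / m), ?_⟩
  intro n hn
  have hFn : 0 < F n := hFpos n hn
  rw [div_le_iff₀ hFn]
  apply Finset.sup'_le
  intro k hkmem
  obtain ⟨hk1, hkn⟩ := Finset.mem_Icc.mp hkmem
  by_cases hnN : N ≤ n
  · by_cases hkN : N ≤ k
    · calc F k ≤ Real.exp δ * F n := hmain k n hkN hkn
        _ ≤ max (max (Real.exp δ) (M / c)) (M / m) * F n :=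
          mul_le_mul_of_nonneg_right (le_trans (le_max_left _ _) (le_max_left _ _)) hFn.le
    · have hkmemN : k ∈ Finset.Icc 1 N := Finset.mem_Icc.mpr ⟨hk1, le_of_not_ge hkN⟩
      calc F k ≤ M := Finset.le_sup' F hkmemN
        _ = (M / c) * c := by field_simp
        _ ≤ (M / c) * F n :=
          mul_le_mul_of_nonneg_left (hclow n hnN) (div_nonneg hMpos.le hcpos.le)
        _ ≤ max (max (Real.exp δ) (M / c)) (M / m) * F n :=
          mul_le_mul_of_nonneg_right (le_trans (le_max_right _ _) (le_max_left _ _)) hFn.le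
  · have hnN' : n ≤ N := le_of_not_ge hnN
    have hkmemN : k ∈ Finset.Icc 1 N := Finset.mem_Icc.mpr ⟨hk1, le_trans hkn hnN'⟩
    have hnmemN : n ∈ Finset.Icc 1 N := Finset.mem_Icc.mpr ⟨hn, hnN'⟩
    calc F k ≤ M := Finset.le_sup' F hkmemN
      _ = (M / m) * m := by field_simp
      _ ≤ (M / m) * F n :=
        mul_le_mul_of_nonneg_left (Finset.inf'_le F hnmemN) (div_nonneg hMpos.le hmpos.le)
      _ ≤ max (max (Real.exp δ) (M / c)) (M / m) * F n :=
        mul_le_mul_of_nonneg_right (le_max_right _ _) hFn.le
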